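/- Let s_1, …, s_n be points in ℝ^d and let D be the n×n real matrix with entries D_{ij} = ‖s_i − s_j‖², where ‖·‖ is the Euclidean norm. Then the rank of D is at most d + 2. -/

import Mathlib

lemma matrix_rank_add_le {n m : ℕ} (A B : Matrix (Fin n) (Fin m) ℝ) :
    (A + B).rank ≤ A.rank + B.rank := by
  have hr : LinearMap.range (A + B).mulVecLin ≤
      LinearMap.range A.mulVecLin ⊔ LinearMap.range B.mulVecLin := by
    rintro _ ⟨x, rfl⟩
    rw [Matrix.mulVecLin_add]
    exact Submodule.add_mem_sup ⟨x, rfl⟩ ⟨x, rfl⟩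
  calc (A + B).rank ≤ Module.finrank ℝ
        ↥(LinearMap.range A.mulVecLin ⊔ LinearMap.range B.mulVecLin) :=
      Submodule.finrank_mono hr
    _ ≤ A.rank + B.rank := Submodule.finrank_add_le_finrank_add_finrank _ _

theorem stmt_15 (n d : ℕ) (s : Fin n → EuclideanSpace ℝ (Fin d)) :
    (Matrix.of fun i j : Fin n => ‖s i - s j‖ ^ 2 : Matrix (Fin n) (Fin n) ℝ).rank ≤ d + 2 := by
  classical
  set M : Matrix (Fin n) (Fin d) ℝ := Matrix.of fun i k => s i k with hM
  have hD : (Matrix.of fun i j : Fin n => ‖s i - s j‖ ^ 2 : Matrix (Fin n) (Fin n) ℝ)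
      = (Matrix.replicateCol (Fin 1) fun i => ‖s i‖ ^ 2) * (Matrix.replicateRow (Fin 1) fun _ => (1:ℝ))
        + ((-2 : ℝ) • M) * M.transpose
        + (Matrix.replicateCol (Fin 1) fun _ => (1:ℝ)) * (Matrix.replicateRow (Fin 1) fun j => ‖s j‖ ^ 2) := by
    ext i j
    have h1 : ‖s i - s j‖ ^ 2 = ‖s i‖ ^ 2 - 2 * inner ℝ (s i) (s j) + ‖s j‖ ^ 2 :=
      norm_sub_sq_real (s i) (s j)
    have h2 : (inner ℝ (s i) (s j) : ℝ) = ∑ k, s i k * s j k := by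
      simp [PiLp.inner_apply, mul_comm]
    simp only [Matrix.add_apply, Matrix.mul_apply, Matrix.replicateCol_apply, Matrix.replicateRow_apply,
      Matrix.smul_apply, Matrix.transpose_apply, Matrix.of_apply, hM,
      Finset.sum_const, Finset.card_univ, Fintype.card_fin, smul_eq_mul]
    rw [h1, h2, Finset.mul_sum]
    simp only [one_smul, mul_one, one_mul]
    rw [show (∑ x, (-2:ℝ) * s i x * s j x) = -∑ x, 2 * (s i x * s j x) by
      rw [← Finset.sum_neg_distrib]; exact Finset.sum_congr rfl fun x _ => by ring]
    ring
  rw [hD]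
  calc ((Matrix.replicateCol (Fin 1) fun i => ‖s i‖ ^ 2) * (Matrix.replicateRow (Fin 1) fun _ => (1:ℝ))
        + ((-2 : ℝ) • M) * M.transpose
        + (Matrix.replicateCol (Fin 1) fun _ => (1:ℝ)) * (Matrix.replicateRow (Fin 1) fun j => ‖s j‖ ^ 2)).rank
      ≤ ((Matrix.replicateCol (Fin 1) fun i => ‖s i‖ ^ 2) * (Matrix.replicateRow (Fin 1) fun _ => (1:ℝ))
        + ((-2 : ℝ) • M) * M.transpose).rank
        + ((Matrix.replicateCol (Fin 1) fun _ => (1:ℝ)) * (Matrix.replicateRow (Fin 1) fun j => ‖s j‖ ^ 2)).rank :=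
        matrix_rank_add_le _ _
    _ ≤ (((Matrix.replicateCol (Fin 1) fun i => ‖s i‖ ^ 2) * (Matrix.replicateRow (Fin 1) fun _ => (1:ℝ))).rank
        + (((-2 : ℝ) • M) * M.transpose).rank)
        + ((Matrix.replicateCol (Fin 1) fun _ => (1:ℝ)) * (Matrix.replicateRow (Fin 1) fun j => ‖s j‖ ^ 2)).rank := by
        gcongr
        exact matrix_rank_add_le _ _
    _ ≤ (1 + d) + 1 := by
        gcongr
        · exact le_trans (Matrix.rank_mul_le_left _ _)
            (le_trans (Matrix.rank_le_card_width _) (by simp))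
        · exact le_trans (Matrix.rank_mul_le_left _ _)
            (le_trans (Matrix.rank_le_card_width _) (by simp))
        · exact le_trans (Matrix.rank_mul_le_left _ _)
            (le_trans (Matrix.rank_le_card_width _) (by simp))
    _ = d + 2 := by omega
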